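/- Let Γ be a 12-regular graph on 256 vertices and C'' a 1-error-correcting code of size 16 in Γ (distinct codewords at distance ≥ 3), contained in a code C' of size 64 with minimum distance ≥ 2, both being subgroups of an abelian group structure on V(Γ) making Γ a Cayley graph. Then each of the 12 cosets of C'' not lying in the coset of C' through a fixed x ∈ V(Γ) contains exactly one neighbor of x, and these account for all 12 neighbors of x. -/
import Mathlib


theorem stmt_19 {A : Type*} [AddCommGroup A] [Fintype A]
    (hA : Fintype.card A = 256)
    (S : Finset A) (hScard : S.card = 12) (hS0 : (0 : A) ∉ S)
    (hSsymm : ∀ s ∈ S, -s ∈ S)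
    (G : SimpleGraph A) (hG : ∀ x y : A, G.Adj x y ↔ x - y ∈ S)
    (C'' C' : AddSubgroup A) (hle : C'' ≤ C')
    (h16 : Nat.card C'' = 16) (h64 : Nat.card C' = 64)
    (hd3 : ∀ a b : A, a - b ∈ C'' → a ≠ b → 3 ≤ G.dist a b)
    (hd2 : ∀ a b : A, a - b ∈ C' → a ≠ b → 2 ≤ G.dist a b) :
    (∀ x z : A, x - z ∉ C' → ∃! y : A, y - z ∈ C'' ∧ G.Adj x y) ∧
    (∀ x y : A, G.Adj x y → x - y ∉ C') := by
  classical
  have hFC'' : Fintype.card C'' = 16 := by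
    simpa [Nat.card_eq_fintype_card] using h16
  have hFC' : Fintype.card C' = 64 := by
    simpa [Nat.card_eq_fintype_card] using h64
  -- Part 2 : neighbors are never in the same C' coset
  have part2 : ∀ x y : A, G.Adj x y → x - y ∉ C' := by
    intro x y hxy hmem
    have hne : x ≠ y := G.ne_of_adj hxy
    have h2 := hd2 x y hmem hne
    have h1 : G.dist x y ≤ 1 := by
      have := SimpleGraph.dist_le (SimpleGraph.Walk.cons hxy SimpleGraph.Walk.nil)
      simpa using this
    omega
  -- two neighbors of x in the same C'' coset coincide
  have hsep : ∀ x y1 y2 : A, G.Adj x y1 → G.Adj x y2 → y1 - y2 ∈ C'' → y1 = y2 := by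
    intro x y1 y2 h1 h2 hm
    by_contra hne
    have h3 := hd3 y1 y2 hm hne
    have hle2 : G.dist y1 y2 ≤ 2 := by
      have := SimpleGraph.dist_le
        (SimpleGraph.Walk.cons h1.symm (SimpleGraph.Walk.cons h2 SimpleGraph.Walk.nil))
      simpa using this
    omega
  refine ⟨?_, part2⟩
  intro x z hxz
  -- quotient setup
  set Q := A ⧸ C'' with hQ
  letI : Fintype Q := Fintype.ofFinite Q
  set mk : A → Q := QuotientAddGroup.mk with hmkdef
  have hmk_eq : ∀ a b : A, mk a = mk b ↔ a - b ∈ C'' := fun a b =>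
    QuotientAddGroup.eq_iff_sub_mem
  -- every fiber of mk has 16 elements
  have fiber : ∀ a0 : A, (Finset.univ.filter fun a => mk a = mk a0).card = 16 := by
    intro a0
    have himg : (Finset.univ.filter fun a => mk a = mk a0)
        = Finset.image (fun c : C'' => a0 + (c : A)) Finset.univ := by
      ext a
      simp only [Finset.mem_filter, Finset.mem_univ, true_and, Finset.mem_image]
      constructor
      · intro h
        exact ⟨⟨a - a0, (hmk_eq a a0).1 h⟩, by simp⟩
      · rintro ⟨c, rfl⟩
        refine (hmk_eq _ _).2 ?_
        have : a0 + (c : A) - a0 = (c : A) := by abel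
        rw [this]; exact c.2
    rw [himg, Finset.card_image_of_injective _
      (fun c1 c2 h => Subtype.ext (add_left_cancel h)), Finset.card_univ, hFC'']
  -- card of the quotient
  have hQcard : Fintype.card Q = 16 := by
    have h1 : (Finset.univ : Finset A).card
        = ∑ q ∈ (Finset.univ : Finset Q), ((Finset.univ.filter fun a => mk a = q)).card :=
      Finset.card_eq_sum_card_fiberwise (fun a _ => Finset.mem_univ _)
    have h2 : ∀ q ∈ (Finset.univ : Finset Q),
        (Finset.univ.filter fun a => mk a = q).card = 16 := by
      intro q _
      obtain ⟨a0, rfl⟩ := QuotientAddGroup.mk_surjective q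
      exact fiber a0
    rw [Finset.sum_congr rfl h2, Finset.sum_const, smul_eq_mul] at h1
    have h3 : 256 = Fintype.card Q * 16 := by
      rw [← hA, ← Finset.card_univ, h1, Finset.card_univ]
    omega
  -- X = the C' coset of x
  set X : Finset A := Finset.univ.filter (fun a => x - a ∈ C') with hXdef
  have hXmem : ∀ a, a ∈ X ↔ x - a ∈ C' := by
    intro a; simp [hXdef]
  have hXcard : X.card = 64 := by
    have himg : X = Finset.image (fun c : C' => x - (c : A)) Finset.univ := by
      ext a
      simp only [hXmem, Finset.mem_image, Finset.mem_univ, true_and]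
      constructor
      · intro h; exact ⟨⟨x - a, h⟩, by simp⟩
      · rintro ⟨c, rfl⟩
        have : x - (x - (c : A)) = (c : A) := by abel
        rw [this]; exact c.2
    rw [himg, Finset.card_image_of_injective _
      (fun c1 c2 h => Subtype.ext (sub_right_injective h)), Finset.card_univ, hFC']
  -- fibers of mk over X
  have hXfiber : ∀ q ∈ X.image mk, (X.filter fun a => mk a = q).card = 16 := by
    intro q hq
    obtain ⟨a0, ha0X, rfl⟩ := Finset.mem_image.1 hq
    have heq : (X.filter fun a => mk a = mk a0)
        = Finset.univ.filter fun a => mk a = mk a0 := by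
      ext a
      simp only [Finset.mem_filter, Finset.mem_univ, true_and]
      constructor
      · rintro ⟨-, h⟩; exact h
      · intro h
        refine ⟨(hXmem a).2 ?_, h⟩
        have hsub : a - a0 ∈ C'' := (hmk_eq a a0).1 h
        have hrw : x - a = (x - a0) - (a - a0) := by abel
        rw [hrw]
        exact sub_mem ((hXmem a0).1 ha0X) (hle hsub)
    rw [heq]; exact fiber a0
  have hUcard : (X.image mk).card = 4 := by
    have h1 : X.card = ∑ q ∈ X.image mk, (X.filter fun a => mk a = q).card :=
      Finset.card_eq_sum_card_fiberwise (fun a ha => Finset.mem_image_of_mem _ ha)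
    rw [Finset.sum_congr rfl hXfiber, Finset.sum_const, smul_eq_mul, hXcard] at h1
    omega
  -- T = cosets of neighbours of x
  set T : Finset Q := S.image (fun s => mk (x - s)) with hTdef
  have hadj : ∀ s ∈ S, G.Adj x (x - s) := by
    intro s hs
    refine (hG x (x - s)).2 ?_
    have : x - (x - s) = s := by abel
    rw [this]; exact hs
  have hTcard : T.card = 12 := by
    rw [hTdef, Finset.card_image_of_injOn, hScard]
    intro s1 hs1 s2 hs2 h
    have hm : (x - s1) - (x - s2) ∈ C'' := (hmk_eq _ _).1 h
    have := hsep x _ _ (hadj s1 hs1) (hadj s2 hs2) hm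
    exact sub_right_injective this
  have hTsub : T ⊆ Finset.univ \ X.image mk := by
    intro q hq
    obtain ⟨s, hs, rfl⟩ := Finset.mem_image.1 hq
    refine Finset.mem_sdiff.2 ⟨Finset.mem_univ _, ?_⟩
    intro hmem
    obtain ⟨a0, ha0, heq⟩ := Finset.mem_image.1 hmem
    have h1 : a0 - (x - s) ∈ C'' := (hmk_eq _ _).1 heq
    have h2 : x - a0 ∈ C' := (hXmem a0).1 ha0
    have h3 : x - (x - s) ∈ C' := by
      have hrw : x - (x - s) = (x - a0) + (a0 - (x - s)) := by abel
      rw [hrw]; exact add_mem h2 (hle h1)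
    exact part2 x (x - s) (hadj s hs) h3
  have hcardsdiff : (Finset.univ \ X.image mk).card = 12 := by
    rw [Finset.card_sdiff_of_subset (Finset.subset_univ _), Finset.card_univ, hQcard, hUcard]
  have hT_eq : T = Finset.univ \ X.image mk :=
    Finset.eq_of_subset_of_card_le hTsub (by rw [hcardsdiff, hTcard])
  have hz : mk z ∈ T := by
    rw [hT_eq]
    refine Finset.mem_sdiff.2 ⟨Finset.mem_univ _, ?_⟩
    intro hmem
    obtain ⟨a0, ha0, heq⟩ := Finset.mem_image.1 hmem
    have h1 : a0 - z ∈ C'' := (hmk_eq _ _).1 heq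
    have h2 : x - a0 ∈ C' := (hXmem a0).1 ha0
    refine hxz ?_
    have hrw : x - z = (x - a0) + (a0 - z) := by abel
    rw [hrw]; exact add_mem h2 (hle h1)
  obtain ⟨s, hs, heq⟩ := Finset.mem_image.1 hz
  refine ⟨x - s, ⟨(hmk_eq _ _).1 heq, hadj s hs⟩, ?_⟩
  rintro y ⟨hy1, hy2⟩
  apply hsep x y (x - s) hy2 (hadj s hs)
  have hrw : y - (x - s) = (y - z) - ((x - s) - z) := by abel
  rw [hrw]
  exact sub_mem hy1 ((hmk_eq _ _).1 heq)
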